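/- For every open J ⊆ ℝ and settling names ρ, σ, τ: if J ⊩₃ ρ = σ and J ⊩₃ σ = τ, then J ⊩₃ ρ = τ. -/

import Mathlib

/-- Settling names over ℝ: a family of pairs of a settling name and an open set of
reals, together with a family of pairs of a settling name and a real. -/
inductive SName : Type 1
  | mk (ι : Type) (elem : ι → SName) (cond : ι → Set ℝ) (hopen : ∀ i, IsOpen (cond i))
       (κ : Type) (relem : κ → SName) (rcond : κ → ℝ) : SName

namespace SName

/-- Index type of the open-set pairs. -/
def idx : SName → Type
  | mk ι _ _ _ _ _ _ => ι

/-- Name component of an open-set pair. -/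
def elem : (σ : SName) → σ.idx → SName
  | mk _ e _ _ _ _ _ => e

/-- Open-set component of an open-set pair. -/
def cond : (σ : SName) → σ.idx → Set ℝ
  | mk _ _ c _ _ _ _ => c

theorem cond_isOpen : ∀ (σ : SName) (i : σ.idx), IsOpen (σ.cond i)
  | mk _ _ _ h _ _ _ => h

/-- Index type of the real pairs. -/
def ridx : SName → Type
  | mk _ _ _ _ κ _ _ => κ

/-- Name component of a real pair. -/
def relem : (σ : SName) → σ.ridx → SName
  | mk _ _ _ _ _ re _ => re

/-- Real component of a real pair. -/
def rcond : (σ : SName) → σ.ridx → ℝ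
  | mk _ _ _ _ _ _ rc => rc

/-- Hereditary extensional equality of settling names. -/
def equiv : SName → SName → Prop
  | mk _ e c _ _ re rc, mk _ e' c' _ _ re' rc' =>
    ((∀ i, ∃ i', equiv (e i) (e' i') ∧ c i = c' i') ∧
     (∀ i', ∃ i, equiv (e i) (e' i') ∧ c i = c' i')) ∧
    ((∀ h, ∃ h', equiv (re h) (re' h') ∧ rc h = rc' h') ∧
     (∀ h', ∃ h, equiv (re h) (re' h') ∧ rc h = rc' h'))

/-- The settling σ^r of a settling name σ at a real r. -/
def settle : SName → ℝ → SName
  | mk ι e c _ κ re rc, r =>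
    mk ({i : ι // r ∈ c i} ⊕ {h : κ // rc h = r})
      (Sum.elim (fun i => settle (e i.1) r) (fun h => settle (re h.1) r))
      (fun _ => Set.univ) (fun _ => isOpen_univ)
      Empty (fun h => h.elim) (fun h => h.elim)

/-- Rank of a settling name (over the open-set pairs), used for the recursive
definition of settling forcing. -/
noncomputable def rank : SName → Ordinal.{0}
  | mk _ e _ _ _ _ _ => Ordinal.lsub fun i => rank (e i)

theorem rank_elem_lt : ∀ (σ : SName) (i : σ.idx), (σ.elem i).rank < σ.rank
  | mk ι e c h κ re rc, i => by
    simpa [rank, elem] using Ordinal.lt_lsub (fun i => rank (e i)) i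

/-- Ported: Mathlib's natural (Hessenberg) sum `♯` is gone; the termination measure is
the lexicographic pair (max, min) of the two ranks instead. -/
theorem lex_maxmin_lt {a a' b : Ordinal.{0}} (h : a' < a) :
    Prod.Lex (· < ·) (· < ·) (max a' b, min a' b) (max a b, min a b) := by
  rcases le_total a b with hab | hab
  · have : a' ≤ b := le_trans h.le hab
    rw [max_eq_right this, max_eq_right hab, min_eq_left this, min_eq_left hab]
    exact Prod.Lex.right _ h
  · rcases lt_or_ge (max a' b) a with h2 | h2
    · rw [max_eq_left hab]
      exact Prod.Lex.left _ _ h2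
    · have : a ≤ b := by
        rcases le_total a' b with h3 | h3
        · rwa [max_eq_right h3] at h2
        · rw [max_eq_left h3] at h2; exact absurd h (not_lt.mpr h2)
      have hb : a = b := le_antisymm this hab
      subst hb
      rw [max_eq_right h.le, min_eq_left h.le, max_self, min_self]
      exact Prod.Lex.right _ h

mutual
  /-- `seq σ τ J` means `J ⊩₃ σ = τ`. -/
  def seq (σ τ : SName) (J : Set ℝ) : Prop :=
    (∀ i : σ.idx, smem (σ.elem i) τ (J ∩ σ.cond i)) ∧
    (∀ j : τ.idx, smem (τ.elem j) σ (J ∩ τ.cond j)) ∧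
    (∀ r ∈ J, equiv (σ.settle r) (τ.settle r))
  termination_by (max σ.rank τ.rank, min σ.rank τ.rank)
  decreasing_by
    · exact lex_maxmin_lt (rank_elem_lt σ i)
    · rw [max_comm σ.rank, min_comm σ.rank]
      exact lex_maxmin_lt (rank_elem_lt τ j)

  /-- `smem σ τ J` means `J ⊩₃ σ ∈ τ`. -/
  def smem (σ τ : SName) (J : Set ℝ) : Prop :=
    (∀ r ∈ J, ∃ (j : τ.idx) (J' : Set ℝ), IsOpen J' ∧ J' ⊆ J ∧ r ∈ J' ∩ τ.cond j ∧
      seq σ (τ.elem j) (J' ∩ τ.cond j)) ∧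
    (∀ r ∈ J, ∃ k : (τ.settle r).idx,
      (τ.settle r).cond k = Set.univ ∧ equiv ((τ.settle r).elem k) (σ.settle r))
  termination_by (max σ.rank τ.rank, min σ.rank τ.rank)
  decreasing_by
    rw [max_comm σ.rank, min_comm σ.rank, max_comm σ.rank, min_comm σ.rank]
    exact lex_maxmin_lt (rank_elem_lt τ j)
end

end SName
namespace SName

theorem equiv_symm : ∀ {σ τ : SName}, equiv σ τ → equiv τ σ
  | .mk _ _ _ _ _ _ _, .mk _ _ _ _ _ _ _, ⟨⟨h1, h2⟩, h3, h4⟩ =>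
    ⟨⟨fun i' => (h2 i').imp fun _ ⟨hi, hc⟩ => ⟨equiv_symm hi, hc.symm⟩,
      fun i => (h1 i).imp fun _ ⟨hi, hc⟩ => ⟨equiv_symm hi, hc.symm⟩⟩,
     fun h' => (h4 h').imp fun _ ⟨hi, hc⟩ => ⟨equiv_symm hi, hc.symm⟩,
     fun h => (h3 h).imp fun _ ⟨hi, hc⟩ => ⟨equiv_symm hi, hc.symm⟩⟩

theorem equiv_trans : ∀ {σ τ ρ : SName}, equiv σ τ → equiv τ ρ → equiv σ ρ
  | .mk _ _ _ _ _ _ _, .mk _ _ _ _ _ _ _, .mk _ _ _ _ _ _ _,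
    ⟨⟨h1, h2⟩, h3, h4⟩, ⟨⟨g1, g2⟩, g3, g4⟩ =>
    ⟨⟨fun i => by
        obtain ⟨i', hi, hc⟩ := h1 i
        obtain ⟨i'', gi, gc⟩ := g1 i'
        exact ⟨i'', equiv_trans hi gi, hc.trans gc⟩,
      fun i'' => by
        obtain ⟨i', gi, gc⟩ := g2 i''
        obtain ⟨i, hi, hc⟩ := h2 i'
        exact ⟨i, equiv_trans hi gi, hc.trans gc⟩⟩,
     fun h => by
        obtain ⟨h', hi, hc⟩ := h3 h
        obtain ⟨h'', gi, gc⟩ := g3 h'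
        exact ⟨h'', equiv_trans hi gi, hc.trans gc⟩,
     fun h'' => by
        obtain ⟨h', gi, gc⟩ := g4 h''
        obtain ⟨h, hi, hc⟩ := h4 h'
        exact ⟨h, equiv_trans hi gi, hc.trans gc⟩⟩

theorem equiv_destruct : ∀ {σ τ : SName}, equiv σ τ →
    ∀ i : σ.idx, ∃ i', equiv (σ.elem i) (τ.elem i') ∧ σ.cond i = τ.cond i'
  | .mk _ _ _ _ _ _ _, .mk _ _ _ _ _ _ _, h => h.1.1

theorem seq_def (σ τ : SName) (J : Set ℝ) : seq σ τ J ↔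
    ((∀ i : σ.idx, smem (σ.elem i) τ (J ∩ σ.cond i)) ∧
    (∀ j : τ.idx, smem (τ.elem j) σ (J ∩ τ.cond j)) ∧
    (∀ r ∈ J, equiv (σ.settle r) (τ.settle r))) := by rw [seq]

theorem smem_def (σ τ : SName) (J : Set ℝ) : smem σ τ J ↔
    ((∀ r ∈ J, ∃ (j : τ.idx) (J' : Set ℝ), IsOpen J' ∧ J' ⊆ J ∧ r ∈ J' ∩ τ.cond j ∧
      seq σ (τ.elem j) (J' ∩ τ.cond j)) ∧
    (∀ r ∈ J, ∃ k : (τ.settle r).idx,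
      (τ.settle r).cond k = Set.univ ∧ equiv ((τ.settle r).elem k) (σ.settle r))) := by
  rw [smem]

theorem seq_symm (σ τ : SName) (J : Set ℝ) (h : seq σ τ J) : seq τ σ J := by
  rw [seq_def] at h ⊢
  exact ⟨h.2.1, h.1, fun r hr => equiv_symm (h.2.2 r hr)⟩

mutual
  theorem seq_mono (σ τ : SName) (J K : Set ℝ) (hK : IsOpen K) (hKJ : K ⊆ J)
      (h : seq σ τ J) : seq σ τ K := by
    rw [seq_def] at h ⊢
    refine ⟨fun i => smem_mono (σ.elem i) τ (J ∩ σ.cond i) (K ∩ σ.cond i) (hK.inter (σ.cond_isOpen i))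
        (fun y hy => ⟨hKJ hy.1, hy.2⟩) (h.1 i),
      fun j => smem_mono (τ.elem j) σ (J ∩ τ.cond j) (K ∩ τ.cond j) (hK.inter (τ.cond_isOpen j))
        (fun y hy => ⟨hKJ hy.1, hy.2⟩) (h.2.1 j),
      fun r hr => h.2.2 r (hKJ hr)⟩
  termination_by (max σ.rank τ.rank, min σ.rank τ.rank)
  decreasing_by
    · exact lex_maxmin_lt (rank_elem_lt σ i)
    · rw [max_comm σ.rank, min_comm σ.rank]
      exact lex_maxmin_lt (rank_elem_lt τ j)

  theorem smem_mono (σ τ : SName) (J K : Set ℝ) (hK : IsOpen K) (hKJ : K ⊆ J)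
      (h : smem σ τ J) : smem σ τ K := by
    rw [smem_def] at h ⊢
    refine ⟨fun r hr => ?_, fun r hr => h.2 r (hKJ hr)⟩
    obtain ⟨j, J', hJ'o, hJ'J, hrm, hs⟩ := h.1 r (hKJ hr)
    exact ⟨j, J' ∩ K, hJ'o.inter hK, Set.inter_subset_right, ⟨⟨hrm.1, hr⟩, hrm.2⟩,
      seq_mono σ (τ.elem j) (J' ∩ τ.cond j) ((J' ∩ K) ∩ τ.cond j) ((hJ'o.inter hK).inter (τ.cond_isOpen j))
        (fun y hy => ⟨hy.1.1, hy.2⟩) hs⟩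
  termination_by (max σ.rank τ.rank, min σ.rank τ.rank)
  decreasing_by
    rw [max_comm σ.rank, min_comm σ.rank, max_comm σ.rank, min_comm σ.rank]
    exact lex_maxmin_lt (rank_elem_lt τ j)
end

mutual
  theorem seq_trans (ρ σ τ : SName) (J : Set ℝ) (h₁ : seq ρ σ J) (h₂ : seq σ τ J) :
      seq ρ τ J := by
    obtain ⟨a1, b1, c1⟩ := (seq_def ρ σ J).mp h₁
    obtain ⟨a2, b2, c2⟩ := (seq_def σ τ J).mp h₂
    refine (seq_def ρ τ J).mpr
      ⟨fun i => smem_trans (ρ.elem i) σ τ J _ Set.inter_subset_left (a1 i) h₂,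
       fun j => smem_trans (τ.elem j) σ ρ J _ Set.inter_subset_left (b2 j) (seq_symm ρ σ J h₁),
       fun r hr => equiv_trans (c1 r hr) (c2 r hr)⟩
  termination_by (max ρ.rank τ.rank, min ρ.rank τ.rank)
  decreasing_by
    · exact lex_maxmin_lt (rank_elem_lt ρ i)
    · rw [max_comm ρ.rank, min_comm ρ.rank]
      exact lex_maxmin_lt (rank_elem_lt τ j)

  theorem smem_trans (x σ τ : SName) (J K : Set ℝ) (hKJ : K ⊆ J)
      (h₁ : smem x σ K) (h₂ : seq σ τ J) : smem x τ K := by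
    obtain ⟨a1, b1⟩ := (smem_def x σ K).mp h₁
    obtain ⟨a2, b2, c2⟩ := (seq_def σ τ J).mp h₂
    refine (smem_def x τ K).mpr ⟨fun r hr => ?_, fun r hr => ?_⟩
    · obtain ⟨i, J', hJ'o, hJ'K, hrm, hs1⟩ := a1 r hr
      obtain ⟨ha, hb⟩ := (smem_def (σ.elem i) τ (J ∩ σ.cond i)).mp (a2 i)
      obtain ⟨j, J'', hJ''o, hJ''sub, hrm2, hs2⟩ := ha r ⟨hKJ hr, hrm.2⟩
      refine ⟨j, J' ∩ J'', hJ'o.inter hJ''o, fun y hy => hJ'K hy.1,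
        ⟨⟨hrm.1, hrm2.1⟩, hrm2.2⟩, ?_⟩
      have hOpen : IsOpen ((J' ∩ J'') ∩ τ.cond j) :=
        (hJ'o.inter hJ''o).inter (τ.cond_isOpen j)
      have hs1' : seq x (σ.elem i) ((J' ∩ J'') ∩ τ.cond j) :=
        seq_mono x (σ.elem i) (J' ∩ σ.cond i) ((J' ∩ J'') ∩ τ.cond j) hOpen (fun y hy => ⟨hy.1.1, (hJ''sub hy.1.2).2⟩) hs1
      have hs2' : seq (σ.elem i) (τ.elem j) ((J' ∩ J'') ∩ τ.cond j) :=
        seq_mono (σ.elem i) (τ.elem j) (J'' ∩ τ.cond j) ((J' ∩ J'') ∩ τ.cond j) hOpen (fun y hy => ⟨hy.1.2, hy.2⟩) hs2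
      exact seq_trans x (σ.elem i) (τ.elem j) _ hs1' hs2'
    · obtain ⟨k, hkc, hke⟩ := b1 r hr
      obtain ⟨k', hk'e, hk'c⟩ := equiv_destruct (c2 r (hKJ hr)) k
      exact ⟨k', by rw [← hk'c, hkc], equiv_trans (equiv_symm hk'e) hke⟩
  termination_by (max x.rank τ.rank, min x.rank τ.rank)
  decreasing_by
    rw [max_comm x.rank, min_comm x.rank, max_comm x.rank, min_comm x.rank]
    exact lex_maxmin_lt (rank_elem_lt τ j)
end

end SName

theorem sforces_eq_trans (J : Set ℝ) (hJ : IsOpen J) (ρ σ τ : SName)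
    (h₁ : SName.seq ρ σ J) (h₂ : SName.seq σ τ J) : SName.seq ρ τ J :=
  SName.seq_trans ρ σ τ J h₁ h₂
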